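/- Fix q ∈ (1, ∞) and let x : (a,b) → ℓ^q(ℝ) be a differentiable curve with values in 𝒰_q (i.e. ‖x(t)‖_{ℓ^q} = 1 and x_n(t) > 0 for all n, t). Define p(t) := (x_n(t)^q) and v(t) := (q·x_n(t)^{q−1}·x_n'(t)). Then p(t) ∈ Δ for all t, v(t) ∈ ℓ¹ with ∑_n v_n(t) = 0, the sequence (v_n(t)·p_n(t)^{1/q − 1}) lies in ℓ^q, and the ℓ^q-Fisher–Rao Finsler norm satisfies F^q_{p(t)}(v(t)) := (∑_{n=0}^∞ |v_n(t)/p_n(t)|^q · p_n(t))^{1/q} = q · ‖x'(t)‖_{ℓ^q} for every t. (This is the infinitesimal form of the statement that the q-root transform is, up to the factor q, an isometry between (Δ^q, F^q) and (𝒰_q, ‖·‖_{ℓ^q}).) -/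

import Mathlib

/-- The ℓ²-probability simplex `Δ`. -/
def simplex : Set (ℕ → ℝ) :=
  {p | Summable p ∧ (∀ n, 0 < p n) ∧ ∑' n, p n = 1}

/-- fix `q ∈ (1,∞)` and let `x : (a,b) → ℓ^q(ℝ)` be a differentiable
curve with values in `𝒰_q`. With `p(t) := (x_n(t)^q)` and
`v(t) := (q x_n(t)^{q−1} x_n'(t))`, one has `p(t) ∈ Δ`, `v(t) ∈ ℓ¹` with
`∑ v_n(t) = 0`, `(v_n(t) p_n(t)^{1/q−1}) ∈ ℓ^q`, and the ℓ^q-Fisher–Rao Finsler norm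
satisfies `F^q_{p(t)}(v(t)) = (∑ |v_n/p_n|^q p_n)^{1/q} = q ‖x'(t)‖_{ℓ^q}`.
(Here `x ^ q` is the real power `Real.rpow`; the instance hypothesis
`Fact (1 ≤ ENNReal.ofReal q)` follows from `1 < q` and makes `ℓ^q` a normed space.) -/
theorem qRootTransform_isometry_infinitesimal (q : ℝ) (hq : 1 < q)
    [Fact (1 ≤ ENNReal.ofReal q)] (a b : ℝ)
    (x x' : ℝ → lp (fun _ : ℕ => ℝ) (ENNReal.ofReal q))
    (hderiv : ∀ t ∈ Set.Ioo a b, HasDerivAt x (x' t) t)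
    (hpos : ∀ t ∈ Set.Ioo a b, ∀ n, 0 < x t n)
    (hsph : ∀ t ∈ Set.Ioo a b, ∑' n, (x t n) ^ q = 1) :
    ∀ t ∈ Set.Ioo a b,
      (fun n => (x t n) ^ q) ∈ simplex ∧
      Summable (fun n => |q * (x t n) ^ (q - 1) * x' t n|) ∧
      (∑' n, q * (x t n) ^ (q - 1) * x' t n) = 0 ∧
      Summable (fun n => |q * (x t n) ^ (q - 1) * x' t n * ((x t n) ^ q) ^ (1 / q - 1)| ^ q) ∧
      (∑' n, |q * (x t n) ^ (q - 1) * x' t n / (x t n) ^ q| ^ q * (x t n) ^ q) ^ (1 / q)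
        = q * ‖x' t‖ := by
  intro t ht
  have hq0 : (0:ℝ) < q := by linarith
  have hq0' : (0:ℝ) ≤ q := hq0.le
  have hqne : q ≠ 0 := ne_of_gt hq0
  have htr : (ENNReal.ofReal q).toReal = q := ENNReal.toReal_ofReal hq0'
  have htrpos : 0 < (ENNReal.ofReal q).toReal := by rw [htr]; exact hq0
  have hXpos : ∀ n, 0 < x t n := hpos t ht
  -- summability of p = X^q
  have hsumXq : Summable (fun n => (x t n) ^ q) := by
    have h := (lp.memℓp (x t)).summable htrpos
    rw [htr] at h
    exact h.congr fun n => by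
      rw [Real.norm_eq_abs, abs_of_pos (hXpos n)]
  have hsph1 : ∑' n, (x t n) ^ q = 1 := hsph t ht
  -- norms of curve points are 1
  have hnormx : ∀ s ∈ Set.Ioo a b, ‖x s‖ = 1 := by
    intro s hs
    have h1 : ‖x s‖ ^ q = 1 := by
      have h := lp.norm_rpow_eq_tsum (p := ENNReal.ofReal q) htrpos (x s)
      rw [htr] at h
      rw [h, ← hsph s hs]
      exact tsum_congr fun n => by
        rw [Real.norm_eq_abs, abs_of_pos (hpos s hs n)]
    calc ‖x s‖ = ‖x s‖ ^ (q * q⁻¹) := by rw [mul_inv_cancel₀ hqne, Real.rpow_one]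
      _ = (‖x s‖ ^ q) ^ q⁻¹ := Real.rpow_mul (norm_nonneg _) q q⁻¹
      _ = 1 := by rw [h1, Real.one_rpow]
  -- conjugate exponent
  set q' : ℝ := q / (q - 1) with hq'def
  have hconj : q.HolderConjugate q' := Real.HolderConjugate.conjExponent hq
  have hq'pos : 0 < q' := hconj.symm.pos
  have htr' : (ENNReal.ofReal q').toReal = q' := ENNReal.toReal_ofReal hq'pos.le
  have htr'pos : 0 < (ENNReal.ofReal q').toReal := by rw [htr']; exact hq'pos
  -- the dual element Y n = X n ^ (q-1)
  have hYterm : ∀ n, ‖(x t n) ^ (q - 1)‖ ^ q' = (x t n) ^ q := by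
    intro n
    rw [Real.norm_eq_abs, abs_of_pos (Real.rpow_pos_of_pos (hXpos n) _),
      ← Real.rpow_mul (hXpos n).le]
    congr 1
    exact hconj.sub_one_mul_conj
  have hYmem : Memℓp (fun n => (x t n) ^ (q - 1)) (ENNReal.ofReal q') := by
    apply memℓp_gen
    rw [htr']
    exact hsumXq.congr fun n => (hYterm n).symm
  set Y : lp (fun _ : ℕ => ℝ) (ENNReal.ofReal q') := ⟨fun n => (x t n) ^ (q - 1), hYmem⟩ with hYdef
  have hYapp : ∀ n, Y n = (x t n) ^ (q - 1) := fun n => rfl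
  have hYnorm : ‖Y‖ = 1 := by
    rw [lp.norm_eq_tsum_rpow htr'pos Y, htr']
    have : ∑' n, ‖Y n‖ ^ q' = 1 := by
      rw [← hsph1]; exact tsum_congr fun n => hYterm n
    rw [this, Real.one_rpow]
  -- Hölder: summability of pairings
  have hconjE : (ENNReal.ofReal q').toReal.HolderConjugate (ENNReal.ofReal q).toReal := by
    rw [htr, htr']; exact hconj.symm
  have hpair : ∀ z : lp (fun _ : ℕ => ℝ) (ENNReal.ofReal q),
      Summable (fun n => (x t n) ^ (q - 1) * z n) := by
    intro z
    have h := lp.summable_mul hconjE Y z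
    refine Summable.of_abs (h.congr fun n => ?_)
    rw [Real.norm_eq_abs, Real.norm_eq_abs, hYapp, ← abs_mul]
  have hpairbound : ∀ z : lp (fun _ : ℕ => ℝ) (ENNReal.ofReal q),
      ‖∑' n, (x t n) ^ (q - 1) * z n‖ ≤ 1 * ‖z‖ := by
    intro z
    have h1 : ‖∑' n, (x t n) ^ (q - 1) * z n‖ ≤ ∑' n, ‖(x t n) ^ (q - 1) * z n‖ := by
      apply norm_tsum_le_tsum_norm
      have h := lp.summable_mul hconjE Y z
      exact h.congr fun n => by
        rw [Real.norm_eq_abs, Real.norm_eq_abs, Real.norm_eq_abs, abs_mul, hYapp]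
    have h2 : (∑' n, ‖(x t n) ^ (q - 1) * z n‖) ≤ ‖Y‖ * ‖z‖ := by
      have h := lp.tsum_mul_le_mul_norm' hconjE Y z
      refine le_trans (le_of_eq (tsum_congr fun n => ?_)) h
      rw [Real.norm_eq_abs, Real.norm_eq_abs, Real.norm_eq_abs, abs_mul, hYapp]
    rw [hYnorm] at h2
    rw [one_mul] at h2 ⊢
    exact h1.trans h2
  -- the continuous linear functional
  set Lfun : lp (fun _ : ℕ => ℝ) (ENNReal.ofReal q) →ₗ[ℝ] ℝ :=
    { toFun := fun z => ∑' n, (x t n) ^ (q - 1) * z n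
      map_add' := fun z w => by
        simp only
        rw [← Summable.tsum_add (hpair z) (hpair w)]
        exact tsum_congr fun n => by
          rw [lp.coeFn_add]; simp [mul_add]
      map_smul' := fun c z => by
        simp only [RingHom.id_apply, smul_eq_mul]
        rw [← tsum_mul_left]
        exact tsum_congr fun n => by
          rw [lp.coeFn_smul]; simp; ring } with hLfundef
  set L : lp (fun _ : ℕ => ℝ) (ENNReal.ofReal q) →L[ℝ] ℝ :=
    Lfun.mkContinuous 1 hpairbound with hLdef
  have hLapp : ∀ z, L z = ∑' n, (x t n) ^ (q - 1) * z n := fun z => rfl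
  -- the composed function has a local max at t
  have hLx : ∀ s ∈ Set.Ioo a b, L (x s) ≤ 1 := by
    intro s hs
    rw [hLapp]
    have h := lp.tsum_mul_le_mul_norm' hconjE Y (x s)
    rw [hYnorm, hnormx s hs, one_mul] at h
    refine le_trans (le_of_eq (tsum_congr fun n => ?_)) h
    rw [Real.norm_eq_abs, Real.norm_eq_abs, hYapp,
      abs_of_pos (Real.rpow_pos_of_pos (hXpos n) _), abs_of_pos (hpos s hs n)]
  have hLxt : L (x t) = 1 := by
    have h : (∑' n, (x t n) ^ (q - 1) * x t n) = ∑' n, (x t n) ^ q := by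
      refine tsum_congr fun n => ?_
      have h2 := Real.rpow_add_one (ne_of_gt (hXpos n)) (q - 1)
      rw [sub_add_cancel] at h2
      rw [← h2]
    rw [hLapp, h, hsph1]
  have hmax : IsLocalMax (fun s => L (x s)) t := by
    filter_upwards [Ioo_mem_nhds ht.1 ht.2] with s hs
    simpa [hLxt] using hLx s hs
  have hder : HasDerivAt (fun s => L (x s)) (L (x' t)) t :=
    (L.hasFDerivAt.comp_hasDerivAt t (hderiv t ht))
  have hLzero : L (x' t) = 0 := hmax.hasDerivAt_eq_zero hder
  have hsumzero : (∑' n, q * (x t n) ^ (q - 1) * x' t n) = 0 := by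
    have h : (∑' n, q * (x t n) ^ (q - 1) * x' t n)
        = q * ∑' n, (x t n) ^ (q - 1) * x' t n := by
      rw [← tsum_mul_left]
      exact tsum_congr fun n => by ring
    rw [h, ← hLapp, hLzero, mul_zero]
  -- summability of |v|
  have hsumv : Summable (fun n => |q * (x t n) ^ (q - 1) * x' t n|) := by
    have h := (lp.summable_mul hconjE Y (x' t)).mul_left q
    exact h.congr fun n => by
      rw [Real.norm_eq_abs, Real.norm_eq_abs, hYapp, abs_mul, abs_mul, abs_of_pos hq0,
        abs_of_pos (Real.rpow_pos_of_pos (hXpos n) _), mul_assoc]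
  -- summability of |x' t n| ^ q
  have hsumx' : Summable (fun n => |x' t n| ^ q) := by
    have h := (lp.memℓp (x' t)).summable htrpos
    rw [htr] at h
    exact h.congr fun n => by rw [Real.norm_eq_abs]
  -- pointwise identity for the fourth claim
  have hkey4 : ∀ n, |q * (x t n) ^ (q - 1) * x' t n * ((x t n) ^ q) ^ (1 / q - 1)| ^ q
      = q ^ q * |x' t n| ^ q := by
    intro n
    have hx := hXpos n
    have h1 : ((x t n) ^ q) ^ (1 / q - 1) = (x t n) ^ (1 - q) := by
      rw [← Real.rpow_mul hx.le]
      congr 1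
      field_simp
    have h2 : (x t n) ^ (q - 1) * (x t n) ^ (1 - q) = 1 := by
      rw [← Real.rpow_add hx]
      norm_num
    have h3 : q * (x t n) ^ (q - 1) * x' t n * ((x t n) ^ q) ^ (1 / q - 1)
        = q * x' t n := by
      rw [h1]
      calc q * (x t n) ^ (q - 1) * x' t n * (x t n) ^ (1 - q)
          = q * x' t n * ((x t n) ^ (q - 1) * (x t n) ^ (1 - q)) := by ring
        _ = q * x' t n := by rw [h2, mul_one]
    rw [h3, abs_mul, abs_of_pos hq0, Real.mul_rpow hq0' (abs_nonneg _)]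
  -- pointwise identity for the fifth claim
  have hkey5 : ∀ n, |q * (x t n) ^ (q - 1) * x' t n / (x t n) ^ q| ^ q * (x t n) ^ q
      = q ^ q * |x' t n| ^ q := by
    intro n
    have hx := hXpos n
    have hxq : (0:ℝ) < (x t n) ^ q := Real.rpow_pos_of_pos hx q
    have h1 : q * (x t n) ^ (q - 1) * x' t n / (x t n) ^ q = q * x' t n / x t n := by
      rw [Real.rpow_sub hx, Real.rpow_one]
      field_simp
    rw [h1, abs_div, abs_mul, abs_of_pos hq0, abs_of_pos hx,
      Real.div_rpow (by positivity) hx.le, div_mul_cancel₀ _ (ne_of_gt hxq),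
      Real.mul_rpow hq0' (abs_nonneg _)]
  -- fourth claim
  have hsum4 : Summable
      (fun n => |q * (x t n) ^ (q - 1) * x' t n * ((x t n) ^ q) ^ (1 / q - 1)| ^ q) := by
    exact (hsumx'.mul_left (q ^ q)).congr fun n => (hkey4 n).symm
  -- fifth claim
  have hfifth : (∑' n, |q * (x t n) ^ (q - 1) * x' t n / (x t n) ^ q| ^ q * (x t n) ^ q) ^ (1 / q)
      = q * ‖x' t‖ := by
    have hsum : (∑' n, |q * (x t n) ^ (q - 1) * x' t n / (x t n) ^ q| ^ q * (x t n) ^ q)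
        = q ^ q * ‖x' t‖ ^ q := by
      have hn := lp.norm_rpow_eq_tsum (p := ENNReal.ofReal q) htrpos (x' t)
      rw [htr] at hn
      rw [hn, ← tsum_mul_left]
      refine tsum_congr fun n => ?_
      rw [hkey5 n, Real.norm_eq_abs]
    rw [hsum, Real.mul_rpow (by positivity) (by positivity),
      ← Real.rpow_mul hq0', ← Real.rpow_mul (norm_nonneg _), mul_one_div, div_self hqne,
      Real.rpow_one, Real.rpow_one]
  exact ⟨⟨hsumXq, fun n => Real.rpow_pos_of_pos (hXpos n) q, hsph1⟩,
    hsumv, hsumzero, hsum4, hfifth⟩
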